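/- Let G be a group, H a subgroup, and suppose (a_1,b_1) is reducible to (a_2,b_2) by elements g_1, ..., g_n in G, meaning there is a chain of pairs where each successive pair is obtained as (a_{k+1}, b_{k+1}) = ([a_k^{-1}, g_k], [g_k, b_k]). Then a_2 b_2 is a product of 2^n conjugates of a_1 b_1 and (a_1 b_1)^{-1} by elements of the subgroup generated by {a_1, g_1, ..., g_n}. -/

import Mathlib

open Matrix

/-- An exchange ring: for every `x` there is an idempotent `e ∈ xR` with `1 - e ∈ (1-x)R`. -/
def IsExchangeRing (R : Type*) [Ring R] : Prop :=
  ∀ x : R, ∃ e r s : R, e * e = e ∧ e = x * r ∧ 1 - e = (1 - x) * s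

/-- The elementary transvection `t_{ij}(x) = e + x e^{ij}` as an element of `GL n R`. -/
def transv {n : ℕ} {R : Type*} [Ring R] (i j : Fin n) (hij : i ≠ j) (x : R) :
    (Matrix (Fin n) (Fin n) R)ˣ :=
  ⟨1 + Matrix.single i j x, 1 + Matrix.single i j (-x),
    by
      have h0 : Matrix.single i j x * Matrix.single i j (-x) = 0 :=
        Matrix.single_mul_single_of_ne (h := hij.symm) ..
      have h1 : Matrix.single i j (-x) * Matrix.single i j x = 0 :=
        Matrix.single_mul_single_of_ne (h := hij.symm) ..
      simp [mul_add, add_mul, h0, h1, ← Matrix.single_add, add_assoc],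
    by
      have h0 : Matrix.single i j x * Matrix.single i j (-x) = 0 :=
        Matrix.single_mul_single_of_ne (h := hij.symm) ..
      have h1 : Matrix.single i j (-x) * Matrix.single i j x = 0 :=
        Matrix.single_mul_single_of_ne (h := hij.symm) ..
      simp [mul_add, add_mul, h0, h1, ← Matrix.single_add, add_assoc]⟩

/-- The elementary subgroup `E_n(R)` of `GL_n(R)`. -/
def elemGroup (n : ℕ) (R : Type*) [Ring R] : Subgroup ((Matrix (Fin n) (Fin n) R)ˣ) :=
  Subgroup.closure { g | ∃ i j : Fin n, ∃ hij : i ≠ j, ∃ x : R, g = transv i j hij x }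

/-- The preelementary subgroup `E_n(I)` of level a two-sided ideal `I`. -/
def preElem (n : ℕ) (R : Type*) [Ring R] (I : TwoSidedIdeal R) : Subgroup ((Matrix (Fin n) (Fin n) R)ˣ) :=
  Subgroup.closure { g | ∃ i j : Fin n, ∃ hij : i ≠ j, ∃ x ∈ I, g = transv i j hij x }

/-- The relative elementary subgroup `E_n(R,I)`: the normal closure of `E_n(I)` in `E_n(R)`. -/
def relElem (n : ℕ) (R : Type*) [Ring R] (I : TwoSidedIdeal R) : Subgroup ((Matrix (Fin n) (Fin n) R)ˣ) :=
  Subgroup.closure { g | ∃ τ ∈ elemGroup n R, ∃ ε ∈ preElem n R I, g = τ⁻¹ * ε * τ }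

/-- The full congruence subgroup `C_n(R,I)`: preimage of the center of `GL_n(R/I)`. -/
def congrSubgroup (n : ℕ) (R : Type*) [Ring R] (I : TwoSidedIdeal R) :
    Subgroup ((Matrix (Fin n) (Fin n) R)ˣ) :=
  Subgroup.comap
    (Units.map ((RingHom.mapMatrix (RingCon.mk' I.ringCon)).toMonoidHom :
      Matrix (Fin n) (Fin n) R →* Matrix (Fin n) (Fin n) I.ringCon.Quotient))
    (Subgroup.center ((Matrix (Fin n) (Fin n) I.ringCon.Quotient)ˣ))

/-- `x` is a product of `m` `H`-conjugates of `a` and `a⁻¹`. -/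
def IsProdConj {G : Type*} [Group G] (H : Subgroup G) (a x : G) (m : ℕ) : Prop :=
  ∃ f : Fin m → G, (∀ k, ∃ h ∈ H, f k = h⁻¹ * a * h ∨ f k = h⁻¹ * a⁻¹ * h) ∧
    x = (List.ofFn f).prod

open scoped commutatorElement

/-- `(p₁,p₂)` reduces to `(q₁,q₂)` by `g`, i.e. `q₁ = [p₁⁻¹, g]` and `q₂ = [g, p₂]`. -/
def ReducesBy {G : Type*} [Group G] (p q : G × G) (g : G) : Prop :=
  q.1 = ⁅p.1⁻¹, g⁆ ∧ q.2 = ⁅g, p.2⁆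

section ProofAux

variable {G : Type*} [Group G] {H : Subgroup G} {a x y : G} {m m' : ℕ}

lemma isProdConj_iff_list :
    IsProdConj H a x m ↔ ∃ l : List G, l.length = m ∧
      (∀ c ∈ l, ∃ h ∈ H, c = h⁻¹ * a * h ∨ c = h⁻¹ * a⁻¹ * h) ∧ x = l.prod := by
  constructor
  · rintro ⟨f, hf, hx⟩
    refine ⟨List.ofFn f, by simp, ?_, hx⟩
    intro c hc
    obtain ⟨i, hi⟩ := List.mem_ofFn.mp hc
    obtain ⟨h, hH, hcase⟩ := hf i
    exact ⟨h, hH, by rw [← hi]; exact hcase⟩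
  · rintro ⟨l, rfl, hl, hx⟩
    refine ⟨l.get, fun k => hl _ (List.get_mem l k), by rwa [List.ofFn_get]⟩

lemma isProdConj_self : IsProdConj H a a 1 := by
  rw [isProdConj_iff_list]
  exact ⟨[a], rfl, by intro c hc; simp at hc; exact ⟨1, H.one_mem, by simp [hc]⟩, by simp⟩

lemma IsProdConj.inv (hx : IsProdConj H a x m) : IsProdConj H a x⁻¹ m := by
  rw [isProdConj_iff_list] at hx ⊢
  obtain ⟨l, hlen, hl, rfl⟩ := hx
  refine ⟨(l.map (·⁻¹)).reverse, by simp [hlen], ?_, ?_⟩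
  · intro c hc
    simp only [List.mem_reverse, List.mem_map] at hc
    obtain ⟨d, hd, rfl⟩ := hc
    obtain ⟨h, hH, hcase⟩ := hl d hd
    refine ⟨h, hH, ?_⟩
    rcases hcase with h1 | h1 <;> simp [h1, mul_assoc]
  · rw [List.prod_inv_reverse]

lemma IsProdConj.conj (hx : IsProdConj H a x m) {h : G} (hh : h ∈ H) :
    IsProdConj H a (h⁻¹ * x * h) m := by
  rw [isProdConj_iff_list] at hx ⊢
  obtain ⟨l, hlen, hl, rfl⟩ := hx
  refine ⟨l.map (fun c => h⁻¹ * c * h), by simp [hlen], ?_, ?_⟩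
  · intro c hc
    simp only [List.mem_map] at hc
    obtain ⟨d, hd, rfl⟩ := hc
    obtain ⟨h', hH', hcase⟩ := hl d hd
    refine ⟨h' * h, H.mul_mem hH' hh, ?_⟩
    rcases hcase with h1 | h1 <;> [left; right] <;> simp [h1, mul_assoc]
  · have hmap : ∀ l : List G, (l.map fun c => h⁻¹ * c * h).prod = h⁻¹ * l.prod * h := by
      intro l
      induction l with
      | nil => simp
      | cons d l ih => simp only [List.map_cons, List.prod_cons, ih]; group
    rw [hmap]

lemma IsProdConj.mul (hx : IsProdConj H a x m) (hy : IsProdConj H a y m') :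
    IsProdConj H a (x * y) (m + m') := by
  rw [isProdConj_iff_list] at hx hy ⊢
  obtain ⟨l, hlen, hl, rfl⟩ := hx
  obtain ⟨l', hlen', hl', rfl⟩ := hy
  refine ⟨l ++ l', by simp [hlen, hlen'], ?_, by simp⟩
  intro c hc
  rcases List.mem_append.mp hc with hc | hc
  · exact hl c hc
  · exact hl' c hc

end ProofAux

theorem reduction_lemma {G : Type*} [Group G] (n : ℕ) (p : Fin (n + 1) → G × G)
    (g : Fin n → G) (hred : ∀ k : Fin n, ReducesBy (p k.castSucc) (p k.succ) (g k)) :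
    IsProdConj (Subgroup.closure ({(p 0).1} ∪ Set.range g))
      ((p 0).1 * (p 0).2) ((p (Fin.last n)).1 * (p (Fin.last n)).2) (2 ^ n) := by
  set H := Subgroup.closure ({(p 0).1} ∪ Set.range g) with hH
  have hgH : ∀ k, g k ∈ H := fun k => Subgroup.subset_closure (Or.inr ⟨k, rfl⟩)
  have key : ∀ k : Fin (n + 1), (p k).1 ∈ H ∧
      IsProdConj H ((p 0).1 * (p 0).2) ((p k).1 * (p k).2) (2 ^ (k : ℕ)) := by
    intro k
    induction k using Fin.induction with
    | zero =>
        refine ⟨Subgroup.subset_closure (Or.inl rfl), ?_⟩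
        simpa using isProdConj_self (H := H) (a := (p 0).1 * (p 0).2)
    | succ i ih =>
        obtain ⟨haH, hprod⟩ := ih
        obtain ⟨h1, h2⟩ := hred i
        set A := (p i.castSucc).1
        set B := (p i.castSucc).2
        have hnext : (p i.succ).1 * (p i.succ).2 =
            ((g i)⁻¹ * A)⁻¹ * (A * B) * ((g i)⁻¹ * A) * (A⁻¹ * (A * B)⁻¹ * A) := by
          rw [h1, h2]
          simp only [commutatorElement_def]
          group
        have hmemA : ⁅A⁻¹, g i⁆ ∈ H := by
          rw [commutatorElement_def]
          exact H.mul_mem (H.mul_mem (H.mul_mem (H.inv_mem haH) (hgH i)) (H.inv_mem (H.inv_mem haH)))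
            (H.inv_mem (hgH i))
        refine ⟨by rw [h1]; exact hmemA, ?_⟩
        rw [hnext]
        have h2pow : (2 : ℕ) ^ ((i.succ : Fin (n + 1)) : ℕ) = 2 ^ (i : ℕ) + 2 ^ (i : ℕ) := by
          rw [Fin.val_succ, pow_succ, mul_two]
        rw [h2pow]
        simp only [Fin.coe_castSucc] at hprod
        exact (hprod.conj (H.mul_mem (H.inv_mem (hgH i)) haH)).mul (hprod.inv.conj haH)
  have := (key (Fin.last n)).2
  simpa [Fin.val_last] using this
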